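/- Fix a positive integer m. The set of words over Σ_m corresponding to m-row Cauchon diagrams C with det(M(C)) ≠ 0 (the primitive Cauchon diagrams) is a regular language over Σ_m. -/

import Mathlib

/-- An `m × n` diagram: each square is black or white (`true` = white). -/
abbrev Diagram (m n : ℕ) := Fin m → Fin n → Bool

/-- The alphabet `Σ_m` of `m × 1` columns. -/
abbrev Col (m : ℕ) := Fin m → Bool

/-- The `m × n` diagram corresponding to a word of `n` columns (concatenated
from left to right). -/
def toDiagram {m : ℕ} (w : List (Col m)) : Diagram m w.length :=
  fun i j => (w.get j) i

/-- A diagram is Cauchon if for every black square, either all squares to its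
left in its row are black, or all squares above it in its column are black. -/
def IsCauchon {m n : ℕ} (D : Diagram m n) : Prop :=
  ∀ (i : Fin m) (j : Fin n), D i j = false →
    (∀ j' : Fin n, j' < j → D i j' = false) ∨
    (∀ i' : Fin m, i' < i → D i' j = false)

open Finset

/-- The finite set of white squares of a diagram. -/
def whites {m n : ℕ} (D : Diagram m n) : Finset (Fin m × Fin n) :=
  Finset.univ.filter fun p => D p.1 p.2 = true

/-- The entry of the skew-adjacency matrix attached to a pair of squares:
`+1` if `p` is strictly to the left of `q` in the same row, or strictly above `q`
in the same column; `-1` in the two opposite situations; `0` otherwise. -/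
def adjEntry {m n : ℕ} (p q : Fin m × Fin n) : ℤ :=
  if (p.1 = q.1 ∧ p.2 < q.2) ∨ (p.2 = q.2 ∧ p.1 < q.1) then 1
  else if (p.1 = q.1 ∧ q.2 < p.2) ∨ (p.2 = q.2 ∧ q.1 < p.1) then -1
  else 0

/-- The skew-adjacency matrix `M(D)` of a diagram `D`, with rows and columns
indexed by the white squares of `D`. -/
def skewAdj {m n : ℕ} (D : Diagram m n) :
    Matrix {p : Fin m × Fin n // p ∈ whites D} {p : Fin m × Fin n // p ∈ whites D} ℤ :=
  fun p q => adjEntry p.1 q.1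

namespace PCR

open Finset

/-! ### Value-level column machinery -/

/-- fold computing the column-sum value `c` (value at the bottom white). -/
def cf (col : ℕ → Bool) (r u : ℕ → ℚ) : ℕ → ℚ
  | 0 => 0
  | i+1 => if col i then r i - 2 * u i else cf col r u i

/-- fold computing partial column sums of the constructed kernel vector. -/
def Cf (col : ℕ → Bool) (r u : ℕ → ℚ) (c : ℚ) : ℕ → ℚ
  | 0 => 0
  | i+1 => if col i then (r i + c)/2 - u i else Cf col r u c i

/-- new row-prefix-sum forms after processing one column. -/
def stepu (m : ℕ) (col : ℕ → Bool) (r u : ℕ → ℚ) : ℕ → ℚ :=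
  fun i => u i + Cf col r u (cf col r u m) (i+1) - Cf col r u (cf col r u m) i

/-- row prefix sums after `n` columns of diagram `D`, for row-sum vector `r`. -/
def uD (m : ℕ) (D : ℕ → ℕ → Bool) (r : ℕ → ℚ) : ℕ → ℕ → ℚ
  | 0 => fun _ => 0
  | n+1 => stepu m (fun i => D i n) r (uD m D r n)

/-- the constructed value at square `(i, j)`. -/
def xD (m : ℕ) (D : ℕ → ℕ → Bool) (r : ℕ → ℚ) (j i : ℕ) : ℚ :=
  uD m D r (j+1) i - uD m D r j i

/-- characterization of the two folds in terms of the last white strictly below `i`. -/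
lemma fold_char (col : ℕ → Bool) (r u : ℕ → ℚ) (c : ℚ) (i : ℕ) :
    (cf col r u i = 0 ∧ Cf col r u c i = 0 ∧ ∀ i' < i, col i' = false) ∨
    (∃ p, p < i ∧ col p = true ∧ cf col r u i = r p - 2 * u p ∧
      Cf col r u c i = (r p + c)/2 - u p ∧ ∀ i', p < i' → i' < i → col i' = false) := by
  induction i with
  | zero => exact Or.inl ⟨rfl, rfl, fun i' h => absurd h (Nat.not_lt_zero _)⟩
  | succ i ih =>
    by_cases h : col i = true
    · refine Or.inr ⟨i, Nat.lt_succ_self _, h, ?_, ?_, fun i' h1 h2 => absurd h2 (by omega)⟩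
      · simp [cf, h]
      · simp [Cf, h]
    · have h' : col i = false := by simpa using h
      rcases ih with ⟨h1, h2, h3⟩ | ⟨p, hp1, hp2, hp3, hp4, hp5⟩
      · refine Or.inl ⟨?_, ?_, ?_⟩
        · simp [cf, h', h1]
        · simp [Cf, h', h2]
        · intro i' hi'
          rcases Nat.lt_succ_iff_lt_or_eq.mp hi' with h | h
          · exact h3 i' h
          · subst h; exact h'
      · refine Or.inr ⟨p, by omega, hp2, ?_, ?_, ?_⟩
        · simp [cf, h', hp3]
        · simp [Cf, h', hp4]
        · intro i' ha hb
          rcases Nat.lt_succ_iff_lt_or_eq.mp hb with h | h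
          · exact hp5 i' ha h
          · subst h; exact h'

lemma cf_mono (col : ℕ → Bool) (r u : ℕ → ℚ) {i k : ℕ} (hik : i ≤ k)
    (hcol : ∀ i', i ≤ i' → col i' = false) : cf col r u k = cf col r u i := by
  induction k with
  | zero => have : i = 0 := by omega
            subst this; rfl
  | succ k ih =>
    rcases Nat.lt_or_ge i (k+1) with h | h
    · have hc : col k = false := hcol k (by omega)
      rw [cf, hc, if_neg (by simp)]
      exact ih (by omega)
    · have : i = k + 1 := by omega
      subst this; rfl

lemma Cf_mono (col : ℕ → Bool) (r u : ℕ → ℚ) (c : ℚ) {i k : ℕ} (hik : i ≤ k)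
    (hcol : ∀ i', i ≤ i' → col i' = false) : Cf col r u c k = Cf col r u c i := by
  induction k with
  | zero => have : i = 0 := by omega
            subst this; rfl
  | succ k ih =>
    rcases Nat.lt_or_ge i (k+1) with h | h
    · have hc : col k = false := hcol k (by omega)
      rw [Cf, hc, if_neg (by simp)]
      exact ih (by omega)
    · have : i = k + 1 := by omega
      subst this; rfl

/-- if the column has a white square (below `m`, and none at or above `m`),
then `Cf` at any point `≥ m` equals `c := cf … m`. -/
lemma Cf_total (col : ℕ → Bool) (r u : ℕ → ℚ) {p : ℕ} (hp : p < m) (hw : col p = true)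
    (hcol : ∀ i', m ≤ i' → col i' = false) :
    Cf col r u (cf col r u m) m = cf col r u m := by
  rcases fold_char col r u (cf col r u m) m with ⟨h1, _, h3⟩ | ⟨q, hq1, hq2, hq3, hq4, _⟩
  · exact absurd (h3 p hp) (by simp [hw])
  · rw [hq4, hq3]; ring

lemma uD_congr (m : ℕ) (D D' : ℕ → ℕ → Bool) (r : ℕ → ℚ) (n : ℕ)
    (h : ∀ i j, j < n → D i j = D' i j) : uD m D r n = uD m D' r n := by
  induction n with
  | zero => rfl
  | succ n ih =>
    show stepu m (fun i => D i n) r (uD m D r n) = stepu m (fun i => D' i n) r (uD m D' r n)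
    rw [ih (fun i j hj => h i j (by omega))]
    have : (fun i => D i n) = fun i => D' i n := funext fun i => h i n (by omega)
    rw [this]

lemma sum_xD (m : ℕ) (D : ℕ → ℕ → Bool) (r : ℕ → ℚ) (n i : ℕ) :
    ∑ j ∈ range n, xD m D r j i = uD m D r n i := by
  have := Finset.sum_range_sub (fun j => uD m D r j i) n
  simpa [xD, uD] using this

lemma sum_col_xD (m : ℕ) (D : ℕ → ℕ → Bool) (r : ℕ → ℚ) (j i : ℕ) :
    ∑ i' ∈ range i, xD m D r j i' =
      Cf (fun i' => D i' j) r (uD m D r j) (cf (fun i' => D i' j) r (uD m D r j) m) i := by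
  have h : ∀ i', xD m D r j i' =
      Cf (fun i'' => D i'' j) r (uD m D r j) (cf (fun i'' => D i'' j) r (uD m D r j) m) (i'+1)
      - Cf (fun i'' => D i'' j) r (uD m D r j) (cf (fun i'' => D i'' j) r (uD m D r j) m) i' := by
    intro i'
    show uD m D r (j+1) i' - uD m D r j i' = _
    show stepu m (fun i'' => D i'' j) r (uD m D r j) i' - uD m D r j i' = _
    simp [stepu]; ring
  rw [Finset.sum_congr rfl (fun i' _ => h i')]
  have := Finset.sum_range_sub
    (fun i' => Cf (fun i'' => D i'' j) r (uD m D r j) (cf (fun i'' => D i'' j) r (uD m D r j) m) i') i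
  simpa [Cf] using this

lemma xD_nonwhite (m : ℕ) (D : ℕ → ℕ → Bool) (r : ℕ → ℚ) {j i : ℕ} (h : D i j = false) :
    xD m D r j i = 0 := by
  show uD m D r (j+1) i - uD m D r j i = 0
  show stepu m (fun i'' => D i'' j) r (uD m D r j) i - uD m D r j i = 0
  simp [stepu, Cf, h]

lemma cf_zero (col : ℕ → Bool) (i : ℕ) : cf col 0 0 i = 0 := by
  induction i with
  | zero => rfl
  | succ i ih => by_cases h : col i = true <;> simp [cf, h, ih]

lemma Cf_zero (col : ℕ → Bool) (i : ℕ) : Cf col 0 0 0 i = 0 := by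
  induction i with
  | zero => rfl
  | succ i ih => by_cases h : col i = true <;> simp [Cf, h, ih]

lemma uD_zero (m : ℕ) (D : ℕ → ℕ → Bool) (n : ℕ) : uD m D 0 n = 0 := by
  induction n with
  | zero => rfl
  | succ n ih =>
    show stepu m (fun i => D i n) 0 (uD m D 0 n) = 0
    rw [ih]
    funext i
    show (0 : ℕ → ℚ) i + Cf _ 0 0 (cf _ 0 0 m) (i+1) - Cf _ 0 0 (cf _ 0 0 m) i = 0
    rw [cf_zero, Cf_zero, Cf_zero]
    simp

lemma uD_ge (m : ℕ) (D : ℕ → ℕ → Bool) (r : ℕ → ℚ) (hD : ∀ i j, m ≤ i → D i j = false)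
    (n : ℕ) {i : ℕ} (hi : m ≤ i) : uD m D r n i = 0 := by
  induction n with
  | zero => rfl
  | succ n ih =>
    show stepu m (fun i' => D i' n) r (uD m D r n) i = 0
    simp [stepu, Cf, hD i n hi, ih]

/-! ### Grid, adjacency, kernel equations -/

def gridW (m n : ℕ) (D : ℕ → ℕ → Bool) : Finset (ℕ × ℕ) :=
  ((range m) ×ˢ (range n)).filter fun p => D p.1 p.2 = true

def rsQ (p q : ℕ × ℕ) : ℚ :=
  if p.1 = q.1 ∧ p.2 < q.2 then 1 else if p.1 = q.1 ∧ q.2 < p.2 then -1 else 0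

def csQ (p q : ℕ × ℕ) : ℚ :=
  if p.2 = q.2 ∧ p.1 < q.1 then 1 else if p.2 = q.2 ∧ q.1 < p.1 then -1 else 0

def adjQ (p q : ℕ × ℕ) : ℚ :=
  if (p.1 = q.1 ∧ p.2 < q.2) ∨ (p.2 = q.2 ∧ p.1 < q.1) then 1
  else if (p.1 = q.1 ∧ q.2 < p.2) ∨ (p.2 = q.2 ∧ q.1 < p.1) then -1
  else 0

lemma adjQ_eq (p q : ℕ × ℕ) : adjQ p q = rsQ p q + csQ p q := by
  rcases p with ⟨a, b⟩; rcases q with ⟨c, d⟩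
  unfold adjQ rsQ csQ
  dsimp only
  split_ifs <;> first | (exfalso; omega) | norm_num

def KerEq (m n : ℕ) (D : ℕ → ℕ → Bool) (x : ℕ × ℕ → ℚ) : Prop :=
  (∀ p, p ∉ gridW m n D → x p = 0) ∧
  ∀ p ∈ gridW m n D, ∑ q ∈ gridW m n D, adjQ p q * x q = 0

lemma mem_gridW {m n : ℕ} {D : ℕ → ℕ → Bool} {p : ℕ × ℕ} :
    p ∈ gridW m n D ↔ p.1 < m ∧ p.2 < n ∧ D p.1 p.2 = true := by
  simp [gridW, Finset.mem_filter, Finset.mem_product]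
  tauto

lemma ker_sum_split (m n : ℕ) (D : ℕ → ℕ → Bool) (x : ℕ × ℕ → ℚ)
    (hx : ∀ p, p ∉ gridW m n D → x p = 0) {i j : ℕ} (hi : i < m) (hj : j < n) :
    ∑ q ∈ gridW m n D, adjQ (i,j) q * x q =
      ((∑ j' ∈ range n, x (i,j')) - 2*(∑ j' ∈ range (j+1), x (i,j')) + x (i,j))
      + ((∑ i' ∈ range m, x (i',j)) - 2*(∑ i' ∈ range (i+1), x (i',j)) + x (i,j)) := by
  have step1 : ∑ q ∈ gridW m n D, adjQ (i,j) q * x q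
      = ∑ q ∈ (range m) ×ˢ (range n), adjQ (i,j) q * x q := by
    refine Finset.sum_subset (show gridW m n D ⊆ (range m) ×ˢ (range n) from
      fun q hq => (Finset.mem_filter.mp hq).1) ?_
    intro q _ hq
    rw [hx q hq, mul_zero]
  rw [step1, Finset.sum_product]
  have hsplit : (∑ i' ∈ range m, ∑ j' ∈ range n, adjQ (i,j) (i',j') * x (i',j'))
      = (∑ i' ∈ range m, ∑ j' ∈ range n, rsQ (i,j) (i',j') * x (i',j'))
      + (∑ i' ∈ range m, ∑ j' ∈ range n, csQ (i,j) (i',j') * x (i',j')) := by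
    rw [← Finset.sum_add_distrib]
    refine Finset.sum_congr rfl fun i' _ => ?_
    rw [← Finset.sum_add_distrib]
    refine Finset.sum_congr rfl fun j' _ => ?_
    rw [adjQ_eq]; ring
  rw [hsplit]
  have hrow : (∑ i' ∈ range m, ∑ j' ∈ range n, rsQ (i,j) (i',j') * x (i',j'))
      = (∑ j' ∈ range n, x (i,j')) - 2*(∑ j' ∈ range (j+1), x (i,j')) + x (i,j) := by
    have zer : ∀ i' ∈ range m, i' ≠ i → ∑ j' ∈ range n, rsQ (i,j) (i',j') * x (i',j') = 0 := by
      intro i' _ hne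
      refine Finset.sum_eq_zero fun j' _ => ?_
      have : rsQ (i,j) (i',j') = 0 := by
        unfold rsQ; dsimp only
        split_ifs with h1 h2 <;> first | rfl | (exfalso; omega)
      rw [this, zero_mul]
    refine (Finset.sum_eq_single_of_mem i (Finset.mem_range.mpr hi) zer).trans ?_
    have point : ∀ j' : ℕ, rsQ (i,j) (i,j') * x (i,j')
        = x (i,j') - 2*(if j' ≤ j then x (i,j') else 0) + (if j' = j then x (i,j') else 0) := by
      intro j'
      unfold rsQ; dsimp only
      rcases lt_trichotomy j j' with h | h | h
      · rw [if_pos ⟨rfl, h⟩, if_neg (by omega), if_neg (by omega)]; ring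
      · rw [if_neg (by omega), if_neg (by omega), if_pos (by omega), if_pos (by omega)]; ring
      · rw [if_neg (by omega), if_pos ⟨rfl, h⟩, if_pos (by omega), if_neg (by omega)]; ring
    rw [Finset.sum_congr rfl (fun j' _ => point j')]
    rw [Finset.sum_add_distrib, Finset.sum_sub_distrib, ← Finset.mul_sum]
    have e1 : ∑ j' ∈ range n, (if j' ≤ j then x (i,j') else 0) = ∑ j' ∈ range (j+1), x (i,j') := by
      rw [← Finset.sum_filter]
      congr 1
      ext j'
      simp only [Finset.mem_filter, Finset.mem_range]
      omega
    have e2 : ∑ j' ∈ range n, (if j' = j then x (i,j') else 0) = x (i,j) := by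
      rw [Finset.sum_ite_eq' (range n) j (fun j' => x (i,j'))]
      rw [if_pos (Finset.mem_range.mpr hj)]
    rw [e1, e2]
  have hcol : (∑ i' ∈ range m, ∑ j' ∈ range n, csQ (i,j) (i',j') * x (i',j'))
      = (∑ i' ∈ range m, x (i',j)) - 2*(∑ i' ∈ range (i+1), x (i',j)) + x (i,j) := by
    rw [Finset.sum_comm]
    have zer : ∀ j' ∈ range n, j' ≠ j → ∑ i' ∈ range m, csQ (i,j) (i',j') * x (i',j') = 0 := by
      intro j' _ hne
      refine Finset.sum_eq_zero fun i' _ => ?_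
      have : csQ (i,j) (i',j') = 0 := by
        unfold csQ; dsimp only
        split_ifs with h1 h2 <;> first | rfl | (exfalso; omega)
      rw [this, zero_mul]
    refine (Finset.sum_eq_single_of_mem j (Finset.mem_range.mpr hj) zer).trans ?_
    have point : ∀ i' : ℕ, csQ (i,j) (i',j) * x (i',j)
        = x (i',j) - 2*(if i' ≤ i then x (i',j) else 0) + (if i' = i then x (i',j) else 0) := by
      intro i'
      unfold csQ; dsimp only
      rcases lt_trichotomy i i' with h | h | h
      · rw [if_pos ⟨rfl, h⟩, if_neg (by omega), if_neg (by omega)]; ring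
      · rw [if_neg (by omega), if_neg (by omega), if_pos (by omega), if_pos (by omega)]; ring
      · rw [if_neg (by omega), if_pos ⟨rfl, h⟩, if_pos (by omega), if_neg (by omega)]; ring
    rw [Finset.sum_congr rfl (fun i' _ => point i')]
    rw [Finset.sum_add_distrib, Finset.sum_sub_distrib, ← Finset.mul_sum]
    have e1 : ∑ i' ∈ range m, (if i' ≤ i then x (i',j) else 0) = ∑ i' ∈ range (i+1), x (i',j) := by
      rw [← Finset.sum_filter]
      congr 1
      ext i'
      simp only [Finset.mem_filter, Finset.mem_range]
      omega
    have e2 : ∑ i' ∈ range m, (if i' = i then x (i',j) else 0) = x (i,j) := by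
      rw [Finset.sum_ite_eq' (range m) i (fun i' => x (i',j))]
      rw [if_pos (Finset.mem_range.mpr hi)]
    rw [e1, e2]
  rw [hrow, hcol]

/-! ### Solution space and the main correspondence -/

def Sol (m n : ℕ) (D : ℕ → ℕ → Bool) (r : ℕ → ℚ) : Prop :=
  (∀ i, m ≤ i → r i = 0) ∧
  ∀ i < m, ((∃ j < n, D i j = true) → uD m D r n i = r i) ∧
    ((¬ ∃ j < n, D i j = true) → r i = 0)

/-- The constructed vector from a solution `r`. -/
def xSol (m n : ℕ) (D : ℕ → ℕ → Bool) (r : ℕ → ℚ) : ℕ × ℕ → ℚ :=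
  fun p => if p ∈ gridW m n D then xD m D r p.2 p.1 else 0

lemma xSol_eq_xD (m n : ℕ) (D : ℕ → ℕ → Bool) (r : ℕ → ℚ)
    (hD : ∀ i j, m ≤ i → D i j = false) {i j : ℕ} (hi : i < m) (hj : j < n) :
    xSol m n D r (i, j) = xD m D r j i := by
  unfold xSol
  by_cases h : (i, j) ∈ gridW m n D
  · rw [if_pos h]
  · rw [if_neg h]
    rw [mem_gridW] at h
    push_neg at h
    have hb : D i j = false := by
      have := h hi hj
      simp only [Bool.not_eq_true] at this ⊢
      exact this
    exact (xD_nonwhite m D r hb).symm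

lemma xSol_eq_xD' (m n : ℕ) (D : ℕ → ℕ → Bool) (r : ℕ → ℚ)
    (hD : ∀ i j, m ≤ i → D i j = false) {i j : ℕ} (hj : j < n) :
    xSol m n D r (i, j) = xD m D r j i := by
  rcases Nat.lt_or_ge i m with hi | hi
  · exact xSol_eq_xD m n D r hD hi hj
  · unfold xSol
    rw [if_neg (by rw [mem_gridW]; push_neg; intro h; omega)]
    unfold xD
    rw [uD_ge m D r hD _ hi, uD_ge m D r hD _ hi]
    norm_num

/-- Direction 1: a solution of the reduced system gives a kernel vector. -/
lemma sol_to_ker (m n : ℕ) (D : ℕ → ℕ → Bool) (r : ℕ → ℚ)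
    (hD : ∀ i j, m ≤ i → D i j = false) (hr : Sol m n D r) :
    KerEq m n D (xSol m n D r) := by
  constructor
  · intro p hp; unfold xSol; rw [if_neg hp]
  · intro p hp
    obtain ⟨i, j⟩ := p
    rw [mem_gridW] at hp
    obtain ⟨hi, hj, hw⟩ := hp
    rw [ker_sum_split m n D _ (fun p hp => by unfold xSol; rw [if_neg hp]) hi hj]
    -- abbreviations
    set col : ℕ → Bool := fun i' => D i' j with hcol
    set u : ℕ → ℚ := uD m D r j with hu
    set c : ℚ := cf col r u m with hc
    -- row sums
    have hS : ∑ j' ∈ range n, xSol m n D r (i, j') = r i := by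
      rw [Finset.sum_congr rfl (fun j' hj' => xSol_eq_xD m n D r hD hi (Finset.mem_range.mp hj'))]
      rw [sum_xD]
      exact ((hr.2 i hi).1 ⟨j, hj, hw⟩)
    have hP : ∑ j' ∈ range (j+1), xSol m n D r (i, j') = uD m D r (j+1) i := by
      rw [Finset.sum_congr rfl (fun j' hj' => xSol_eq_xD m n D r hD hi
        (lt_of_lt_of_le (Finset.mem_range.mp hj') hj))]
      exact sum_xD m D r (j+1) i
    -- column sums
    have hcolsum : ∀ k, ∑ i' ∈ range k, xSol m n D r (i', j) = Cf col r u c k := by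
      intro k
      rw [Finset.sum_congr rfl (fun i' _ => xSol_eq_xD' m n D r hD hj)]
      exact sum_col_xD m D r j k
    have hSc : ∑ i' ∈ range m, xSol m n D r (i', j) = c := by
      rw [hcolsum m]
      exact Cf_total col r u hi hw (fun i' hi' => hD i' j hi')
    have hPc : ∑ i' ∈ range (i+1), xSol m n D r (i', j) = (r i + c)/2 - u i := by
      rw [hcolsum (i+1)]
      show (if col i then (r i + c)/2 - u i else Cf col r u c i) = _
      rw [if_pos hw]
    have hxp : xSol m n D r (i, j) = uD m D r (j+1) i - u i :=
      xSol_eq_xD m n D r hD hi hj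
    have hustep : uD m D r (j+1) i = u i + Cf col r u c (i+1) - Cf col r u c i := rfl
    have hCi1 : Cf col r u c (i+1) = (r i + c)/2 - u i := by
      show (if col i then (r i + c)/2 - u i else Cf col r u c i) = _
      rw [if_pos hw]
    rw [hS, hP, hSc, hPc, hxp, hustep, hCi1]
    ring

/-- row sums of a kernel vector. -/
def rowsums (m n : ℕ) (x : ℕ × ℕ → ℚ) : ℕ → ℚ :=
  fun i => if i < m then ∑ j' ∈ range n, x (i, j') else 0

/-- Direction 2 (key induction): for a kernel vector `x` with row sums `r`,
the canonical forms `uD` compute the genuine prefix sums of `x`. -/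
lemma ker_prefix (m n : ℕ) (D : ℕ → ℕ → Bool) (x : ℕ × ℕ → ℚ)
    (hD : ∀ i j, m ≤ i → D i j = false) (hk : KerEq m n D x) :
    ∀ j, j ≤ n → ∀ i, uD m D (rowsums m n x) j i = ∑ j' ∈ range j, x (i, j') := by
  obtain ⟨hx0, hkeq⟩ := hk
  set r : ℕ → ℚ := rowsums m n x with hrdef
  intro j
  induction j with
  | zero => intro _ i; simp [uD]
  | succ j ih =>
    intro hjn i
    have hj : j < n := by omega
    have IH := ih (by omega)
    set col : ℕ → Bool := fun i' => D i' j with hcoldef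
    set u : ℕ → ℚ := uD m D r j with hudef
    set c : ℚ := cf col r u m with hcdef
    -- x vanishes on non-white squares of column j
    have hxnw : ∀ i', col i' = false → x (i', j) = 0 := by
      intro i' hb
      apply hx0
      rw [mem_gridW]
      push_neg
      intro _ _
      simp only [Bool.not_eq_true]
      exact hb
    -- if the column has a white, c = actual column sum
    have hcsum : ∀ p, p < m → col p = true →
        (∀ i', p < i' → col i' = false) →
        c = ∑ i' ∈ range m, x (i', j) := by
      intro p hpm hpw hpl
      -- kernel equation at the bottom white (p, j)
      have hker := hkeq (p, j) (mem_gridW.mpr ⟨hpm, hj, hpw⟩)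
      rw [ker_sum_split m n D x hx0 hpm hj] at hker
      have hrp : ∑ j' ∈ range n, x (p, j') = r p := by
        rw [hrdef]; unfold rowsums; rw [if_pos hpm]
      have hpre : ∑ j' ∈ range (j+1), x (p, j') = u p + x (p, j) := by
        rw [Finset.sum_range_succ, IH p]
      have hbot : ∑ i' ∈ range (p+1), x (i', j) = ∑ i' ∈ range m, x (i', j) := by
        refine Finset.sum_subset (by intro q hq; simp only [Finset.mem_range] at *; omega) ?_
        intro i' hi' hni'
        simp only [Finset.mem_range] at hi' hni'
        exact hxnw i' (hpl i' (by omega))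
      rw [hrp, hpre, hbot] at hker
      -- c = r p - 2 u p  by the fold characterization
      have hcval : c = r p - 2 * u p := by
        rcases fold_char col r u c m with ⟨h1, _, h3⟩ | ⟨q, hq1, hq2, hq3, _, hq5⟩
        · exact absurd (h3 p hpm) (by simp [hpw])
        · have : q = p := by
            by_contra hne
            rcases Nat.lt_or_ge q p with hlt | hge
            · exact absurd (hq5 p hlt hpm) (by simp [hpw])
            · have hpq : p < q := by omega
              exact absurd (hpl q hpq) (by simp [hq2])
          rw [hcdef, hq3, this]
      rw [hcval]
      linarith
    -- partial column sums equal Cf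
    have hCf : ∀ k, Cf col r u c k = ∑ i' ∈ range k, x (i', j) := by
      intro k
      induction k with
      | zero => simp [Cf]
      | succ k ihk =>
        by_cases hw : col k = true
        · -- k is white, hence k < m
          have hkm : k < m := by
            by_contra h
            have hDk : D k j = true := hw
            have := hD k j (by omega)
            simp [this] at hDk
          -- bottom white of the column
          have hbot : ∃ p, p < m ∧ col p = true ∧ ∀ i', p < i' → col i' = false := by
            rcases fold_char col r u c m with ⟨_, _, h3⟩ | ⟨q, hq1, hq2, _, _, hq5⟩
            · exact absurd (h3 k hkm) (by simp [hw])
            · exact ⟨q, hq1, hq2, fun i' hqi' => by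
                rcases Nat.lt_or_ge i' m with h | h
                · exact hq5 i' hqi' h
                · exact hD i' j h⟩
          obtain ⟨p, hpm, hpw, hpl⟩ := hbot
          have hc' := hcsum p hpm hpw hpl
          have hker := hkeq (k, j) (mem_gridW.mpr ⟨hkm, hj, hw⟩)
          rw [ker_sum_split m n D x hx0 hkm hj] at hker
          have hrk : ∑ j' ∈ range n, x (k, j') = r k := by
            rw [hrdef]; unfold rowsums; rw [if_pos hkm]
          have hpre : ∑ j' ∈ range (j+1), x (k, j') = u k + x (k, j) := by
            rw [Finset.sum_range_succ, IH k]
          rw [hrk, hpre, ← hc'] at hker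
          have : ∑ i' ∈ range (k+1), x (i', j) = (r k + c)/2 - u k := by linarith
          rw [this]
          show (if col k then (r k + c)/2 - u k else Cf col r u c k) = _
          rw [if_pos hw]
        · have hw' : col k = false := by simpa using hw
          rw [Finset.sum_range_succ, hxnw k hw', add_zero, ← ihk]
          show (if col k then (r k + c)/2 - u k else Cf col r u c k) = _
          rw [hw']
          simp
    -- conclude
    show stepu m col r u i = ∑ j' ∈ range (j+1), x (i, j')
    unfold stepu
    rw [← hcdef, hCf (i+1), hCf i, Finset.sum_range_succ, Finset.sum_range_succ, IH i]
    ring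

/-- The main correspondence: nontrivial kernel iff nontrivial solution. -/
lemma ker_iff_sol (m n : ℕ) (D : ℕ → ℕ → Bool)
    (hD : ∀ i j, m ≤ i → D i j = false) :
    (∃ x, x ≠ 0 ∧ KerEq m n D x) ↔ (∃ r, r ≠ 0 ∧ Sol m n D r) := by
  constructor
  · rintro ⟨x, hx, hk⟩
    set r : ℕ → ℚ := rowsums m n x with hrdef
    have hpre := ker_prefix m n D x hD hk
    refine ⟨r, ?_, ?_, ?_⟩
    · -- r ≠ 0
      intro hr0
      apply hx
      funext p
      obtain ⟨i, j⟩ := p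
      by_cases hp : (i, j) ∈ gridW m n D
      · rw [mem_gridW] at hp
        obtain ⟨hi, hj, _⟩ := hp
        have e1 := hpre (j+1) (by omega) i
        have e2 := hpre j (by omega) i
        rw [← hrdef, hr0, uD_zero] at e1 e2
        have hx00 : x (i, j) = 0 := by
          have hdiff : x (i, j) = ∑ j' ∈ range (j+1), x (i, j') - ∑ j' ∈ range j, x (i, j') := by
            rw [Finset.sum_range_succ]; ring
          rw [hdiff, ← e1, ← e2]; simp
        simpa using hx00
      · exact hk.1 _ hp
    · intro i hi; rw [hrdef]; unfold rowsums; rw [if_neg (by omega)]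
    · intro i hi
      constructor
      · intro _
        rw [hpre n (le_refl n) i, hrdef]
        unfold rowsums
        rw [if_pos hi]
      · intro hnw
        rw [hrdef]; unfold rowsums
        rw [if_pos hi]
        refine Finset.sum_eq_zero fun j' hj' => ?_
        apply hk.1
        rw [mem_gridW]
        push_neg
        intro _ hj''
        simp only [Bool.not_eq_true]
        by_contra hno
        exact hnw ⟨j', Finset.mem_range.mp hj', by simpa using hno⟩
  · rintro ⟨r, hr, hsol⟩
    refine ⟨xSol m n D r, ?_, sol_to_ker m n D r hD hsol⟩
    intro hx0
    apply hr
    have hu0 : ∀ i, i < m → uD m D r n i = 0 := by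
      intro i hi
      rw [← sum_xD]
      refine Finset.sum_eq_zero fun j' hj' => ?_
      have := congrFun hx0 (i, j')
      rw [xSol_eq_xD' m n D r hD (Finset.mem_range.mp hj')] at this
      exact this
    funext i
    rcases Nat.lt_or_ge i m with hi | hi
    · by_cases hw : ∃ j < n, D i j = true
      · have := (hsol.2 i hi).1 hw
        rw [hu0 i hi] at this
        exact this.symm
      · exact (hsol.2 i hi).2 hw
    · exact hsol.1 i hi

/-! ### Bridge to the skew-adjacency matrix of the statement -/

def extD {m : ℕ} (w : List (Col m)) : ℕ → ℕ → Bool :=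
  fun i j => if h : i < m ∧ j < w.length then w.get ⟨j, h.2⟩ ⟨i, h.1⟩ else false

lemma extD_lt {m : ℕ} (w : List (Col m)) (i : Fin m) (j : Fin w.length) :
    extD w i.val j.val = toDiagram w i j := by
  unfold extD toDiagram
  rw [dif_pos ⟨i.isLt, j.isLt⟩]

lemma extD_ge {m : ℕ} (w : List (Col m)) (i j : ℕ) (h : m ≤ i) : extD w i j = false := by
  unfold extD
  rw [dif_neg (by omega)]

def Mq (m n : ℕ) (D : ℕ → ℕ → Bool) : Matrix ↥(gridW m n D) ↥(gridW m n D) ℚ :=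
  fun p q => adjQ p.1 q.1

lemma adjEntry_cast {m n : ℕ} (p q : Fin m × Fin n) :
    ((adjEntry p q : ℤ) : ℚ) = adjQ (p.1.val, p.2.val) (q.1.val, q.2.val) := by
  unfold adjEntry adjQ
  simp only [Fin.ext_iff, Fin.lt_def]
  split_ifs <;> norm_num

def gridEquiv {m : ℕ} (w : List (Col m)) :
    {p : Fin m × Fin w.length // p ∈ whites (toDiagram w)} ≃ ↥(gridW m w.length (extD w)) where
  toFun p := ⟨(p.1.1.val, p.1.2.val), by
    rw [mem_gridW]
    refine ⟨p.1.1.isLt, p.1.2.isLt, ?_⟩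
    rw [extD_lt]
    exact (Finset.mem_filter.mp p.2).2⟩
  invFun q := ⟨(⟨q.1.1, (mem_gridW.mp q.2).1⟩, ⟨q.1.2, (mem_gridW.mp q.2).2.1⟩), by
    unfold whites
    simp only [Finset.mem_filter, Finset.mem_univ, true_and]
    have := (mem_gridW.mp q.2).2.2
    rw [← extD_lt]
    exact this⟩
  left_inv p := by ext <;> rfl
  right_inv q := by ext <;> rfl

lemma det_bridge {m : ℕ} (w : List (Col m)) :
    (((skewAdj (toDiagram w)).det : ℤ) : ℚ) = (Mq m w.length (extD w)).det := by
  have h1 : (((skewAdj (toDiagram w)).det : ℤ) : ℚ)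
      = ((skewAdj (toDiagram w)).map ((Int.castRingHom ℚ) : ℤ →+* ℚ)).det :=
    RingHom.map_det (Int.castRingHom ℚ) _
  rw [h1]
  rw [← Matrix.det_reindex_self (gridEquiv w)
    ((skewAdj (toDiagram w)).map ((Int.castRingHom ℚ) : ℤ →+* ℚ))]
  congr 1
  ext p q
  rw [Matrix.reindex_apply, Matrix.submatrix_apply, Matrix.map_apply]
  show (((skewAdj (toDiagram w)) ((gridEquiv w).symm p) ((gridEquiv w).symm q) : ℤ) : ℚ) = _
  unfold skewAdj
  rw [adjEntry_cast]
  congr 1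

lemma det_iff_ker {m : ℕ} (w : List (Col m)) :
    (skewAdj (toDiagram w)).det = 0 ↔
      ∃ x, x ≠ 0 ∧ KerEq m w.length (extD w) x := by
  set n := w.length
  set D := extD w
  have h1 : (skewAdj (toDiagram w)).det = 0 ↔ (Mq m n D).det = 0 := by
    rw [← det_bridge w]
    exact ⟨fun h => by rw [h]; norm_num, fun h => by exact_mod_cast h⟩
  rw [h1, ← Matrix.exists_mulVec_eq_zero_iff]
  constructor
  · rintro ⟨v, hv, hmv⟩
    refine ⟨fun p => if h : p ∈ gridW m n D then v ⟨p, h⟩ else 0, ?_, ?_, ?_⟩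
    · intro h0
      apply hv
      funext q
      have h2 : (if h : q.1 ∈ gridW m n D then v ⟨q.1, h⟩ else 0) = 0 := congrFun h0 q.1
      rw [dif_pos q.2] at h2
      exact h2
    · intro p hp
      exact dif_neg hp
    · intro p hp
      have := congrFun hmv ⟨p, hp⟩
      simp only [Matrix.mulVec, dotProduct, Pi.zero_apply] at this
      have hsum : ∑ q ∈ gridW m n D,
          adjQ p q * (if h : q ∈ gridW m n D then v ⟨q, h⟩ else 0)
          = ∑ q : ↥(gridW m n D), adjQ p q.1 * v q := by
        rw [← Finset.sum_coe_sort (gridW m n D)]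
        refine Finset.sum_congr rfl fun q _ => ?_
        rw [dif_pos q.2]
      rw [hsum]
      exact this
  · rintro ⟨x, hx, hker⟩
    refine ⟨fun q => x q.1, ?_, ?_⟩
    · intro h0
      apply hx
      funext p
      by_cases hp : p ∈ gridW m n D
      · have := congrFun h0 ⟨p, hp⟩
        simpa using this
      · exact hker.1 p hp
    · funext p
      show ∑ q : ↥(gridW m n D), Mq m n D p q * x q.1 = 0
      have hsum : ∑ q : ↥(gridW m n D), adjQ p.1 q.1 * x q.1
          = ∑ q ∈ gridW m n D, adjQ p.1 q * x q := by
        rw [← Finset.sum_coe_sort (gridW m n D)]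
      have := hker.2 p.1 p.2
      rw [← hsum] at this
      exact this

/-! ### The finite-state symbolic representation -/

def sgn (b : Bool) : ℚ := if b then 1 else -1

def form {m : ℕ} (e : Fin m × Bool) (r : Fin m → ℚ) (i : Fin m) : ℚ :=
  (r i + sgn e.2 * r e.1)/2

def extr {m : ℕ} (r : Fin m → ℚ) : ℕ → ℚ := fun i => if h : i < m then r ⟨i, h⟩ else 0

def colN {m : ℕ} (col : Col m) : ℕ → Bool := fun i => if h : i < m then col ⟨i, h⟩ else false

def prevW {m : ℕ} (col : Col m) : ℕ → Option (Fin m)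
  | 0 => none
  | i+1 => if h : i < m then (if col ⟨i, h⟩ then some ⟨i, h⟩ else prevW col i) else prevW col i

def stepB {m : ℕ} (B : Fin m → Fin m × Bool) (col : Col m) : Fin m → Fin m × Bool :=
  fun i => if col i then
      match prevW col i.val with
      | some p => B p
      | none => (((prevW col m).map (fun p => ((B p).1, !(B p).2))).getD (i, true))
    else B i

def cInterp {m : ℕ} (B : Fin m → Fin m × Bool) (r : Fin m → ℚ) : Option (Fin m) → ℚ :=
  fun o => o.elim 0 (fun p => -(sgn (B p).2) * r (B p).1)

lemma prevW_succ_lt {m : ℕ} (col : Col m) {k : ℕ} (h : k < m) :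
    prevW col (k+1) = if col ⟨k, h⟩ = true then some ⟨k, h⟩ else prevW col k := by
  rw [show prevW col (k+1) = if h' : k < m then
    (if col ⟨k, h'⟩ = true then some ⟨k, h'⟩ else prevW col k) else prevW col k from rfl,
    dif_pos h]

lemma prevW_succ_ge {m : ℕ} (col : Col m) {k : ℕ} (h : ¬ k < m) :
    prevW col (k+1) = prevW col k := by
  rw [show prevW col (k+1) = if h' : k < m then
    (if col ⟨k, h'⟩ = true then some ⟨k, h'⟩ else prevW col k) else prevW col k from rfl,
    dif_neg h]

lemma R1 {m : ℕ} (col : Col m) (B : Fin m → Fin m × Bool) (r : Fin m → ℚ) (u : ℕ → ℚ)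
    (hu : ∀ i : Fin m, u i.val = form (B i) r i) :
    ∀ k, cf (colN col) (extr r) u k = cInterp B r (prevW col k) := by
  intro k
  induction k with
  | zero => rfl
  | succ k ih =>
    rw [show cf (colN col) (extr r) u (k+1)
      = if colN col k then extr r k - 2 * u k else cf (colN col) (extr r) u k from rfl]
    by_cases h : k < m
    · rw [show colN col k = col ⟨k, h⟩ from dif_pos h, prevW_succ_lt col h]
      by_cases hc : col ⟨k, h⟩ = true
      · rw [if_pos (by rw [hc]), if_pos hc]
        show extr r k - 2 * u k = cInterp B r (some ⟨k, h⟩)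
        have h2 : u k = form (B ⟨k, h⟩) r ⟨k, h⟩ := hu ⟨k, h⟩
        rw [h2]
        unfold extr form cInterp
        rw [dif_pos h]
        simp only [Option.elim]
        ring
      · rw [if_neg (by simpa using hc), if_neg hc]
        exact ih
    · rw [show colN col k = false from dif_neg h, prevW_succ_ge col h]
      simpa using ih

def CInterp {m : ℕ} (r : Fin m → ℚ) (u : ℕ → ℚ) (c : ℚ) : Option (Fin m) → ℚ :=
  fun o => o.elim 0 (fun p => (r p + c)/2 - u p.val)

lemma R2 {m : ℕ} (col : Col m) (r : Fin m → ℚ) (u : ℕ → ℚ) (c : ℚ) :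
    ∀ k, Cf (colN col) (extr r) u c k = CInterp r u c (prevW col k) := by
  intro k
  induction k with
  | zero => rfl
  | succ k ih =>
    rw [show Cf (colN col) (extr r) u c (k+1)
      = if colN col k then (extr r k + c)/2 - u k else Cf (colN col) (extr r) u c k from rfl]
    by_cases h : k < m
    · rw [show colN col k = col ⟨k, h⟩ from dif_pos h, prevW_succ_lt col h]
      by_cases hc : col ⟨k, h⟩ = true
      · rw [if_pos (by rw [hc]), if_pos hc]
        show (extr r k + c)/2 - u k = CInterp r u c (some ⟨k, h⟩)
        unfold extr CInterp
        rw [dif_pos h]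
        simp only [Option.elim]
      · rw [if_neg (by simpa using hc), if_neg hc]
        exact ih
    · rw [show colN col k = false from dif_neg h, prevW_succ_ge col h]
      simpa using ih

lemma R3 {m : ℕ} (col : Col m) (i : Fin m) (hc : col i = true) :
    ∀ k, i.val < k → ∃ p, prevW col k = some p := by
  intro k
  induction k with
  | zero => omega
  | succ k ih =>
    intro hik
    unfold prevW
    by_cases h : k < m
    · rw [dif_pos h]
      by_cases hck : col ⟨k, h⟩ = true
      · rw [if_pos hck]; exact ⟨⟨k, h⟩, rfl⟩
      · rw [if_neg hck]
        apply ih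
        rcases Nat.lt_or_ge i.val k with h' | h'
        · exact h'
        · have hik2 : i = (⟨k, h⟩ : Fin m) := by
            apply Fin.ext
            show i.val = k
            omega
          rw [← hik2] at hck
          exact absurd hc hck
    · rw [dif_neg h]
      apply ih
      have := i.isLt
      omega

lemma prevW_succ_self {m : ℕ} (col : Col m) (i : Fin m) (hc : col i = true) :
    prevW col (i.val + 1) = some i := by
  unfold prevW
  rw [dif_pos i.isLt]
  rw [if_pos (by convert hc)]

/-- The key per-column simulation: the value-level update matches
the symbolic update. -/
lemma stepu_form {m : ℕ} (col : Col m) (B : Fin m → Fin m × Bool) (r : Fin m → ℚ)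
    (u : ℕ → ℚ) (hu : ∀ i : Fin m, u i.val = form (B i) r i) :
    ∀ i : Fin m, stepu m (colN col) (extr r) u i.val = form (stepB B col i) r i := by
  intro i
  set c : ℚ := cf (colN col) (extr r) u m with hc
  show u i.val + Cf (colN col) (extr r) u c (i.val+1) - Cf (colN col) (extr r) u c i.val
    = form (stepB B col i) r i
  by_cases hci : col i = true
  · have h1 : Cf (colN col) (extr r) u c (i.val+1) = (r i + c)/2 - u i.val := by
      rw [R2, prevW_succ_self col i hci]
      show (r i + c)/2 - u i.val = _
      rfl
    rw [h1, R2]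
    rcases hp : prevW col i.val with _ | p
    · -- i is the topmost white of the column
      obtain ⟨q, hq⟩ := R3 col i hci m i.isLt
      have hcval : c = -(sgn (B q).2) * r (B q).1 := by
        rw [hc, R1 col B r u hu, hq]; rfl
      have hstep : stepB B col i = ((B q).1, !(B q).2) := by
        unfold stepB
        rw [if_pos hci, hp, hq]
        rfl
      rw [hstep, hcval]
      unfold form CInterp
      simp only [Option.elim]
      have : sgn (!(B q).2) = -sgn (B q).2 := by
        unfold sgn; cases (B q).2 <;> norm_num
      rw [this]
      ring
    · -- p is the white immediately above i
      have hstep : stepB B col i = B p := by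
        unfold stepB
        rw [if_pos hci, hp]
      rw [hstep]
      unfold CInterp
      simp only [Option.elim]
      have hup : u p.val = form (B p) r p := hu p
      rw [hup]
      unfold form
      ring
  · have hcolN : colN col i.val = false := by
      unfold colN
      rw [dif_pos i.isLt]
      simpa using hci
    have h1 : Cf (colN col) (extr r) u c (i.val+1) = Cf (colN col) (extr r) u c i.val := by
      show (if colN col i.val then _ else Cf (colN col) (extr r) u c i.val) = _
      rw [hcolN]
      simp
    have hstep : stepB B col i = B i := by
      unfold stepB
      rw [if_neg (by simpa using hci)]
    rw [h1, hstep]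
    have := hu i
    linarith [hu i]

/-! ### The DFA -/

abbrev PState (m : ℕ) := (Fin m → Fin m × Bool) × (Fin m → Bool) × Bool

def okCol {m : ℕ} (N : Fin m → Bool) (col : Col m) : Prop :=
  ∀ i : Fin m, col i = false → N i = true → ∀ i' : Fin m, i' < i → col i' = false

instance {m : ℕ} (N : Fin m → Bool) (col : Col m) : Decidable (okCol N col) := by
  unfold okCol; infer_instance

def pcrDFA (m : ℕ) : DFA (Col m) (PState m) where
  step s col := (stepB s.1 col, fun i => s.2.1 i || col i, s.2.2 && decide (okCol s.2.1 col))
  start := (fun i => (i, false), fun _ => false, true)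
  accept := {s | s.2.2 = true ∧ ∀ r : Fin m → ℚ,
      (∀ i, if s.2.1 i = true then form (s.1 i) r i = r i else r i = 0) → r = 0}

def CauchonN (m n : ℕ) (D : ℕ → ℕ → Bool) : Prop :=
  ∀ i < m, ∀ j < n, D i j = false →
    (∀ j' < j, D i j' = false) ∨ (∀ i' < i, D i' j = false)

lemma extD_append_lt {m : ℕ} (w : List (Col m)) (a : Col m) (i j : ℕ) (hj : j < w.length) :
    extD (w ++ [a]) i j = extD w i j := by
  unfold extD
  by_cases h : i < m
  · rw [dif_pos ⟨h, by simp; omega⟩, dif_pos ⟨h, hj⟩]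
    congr 1
    rw [List.get_eq_getElem, List.get_eq_getElem, List.getElem_append_left]
  · rw [dif_neg (by omega), dif_neg (by omega)]

lemma extD_append_last {m : ℕ} (w : List (Col m)) (a : Col m) (i : ℕ) :
    extD (w ++ [a]) i w.length = colN a i := by
  unfold extD colN
  by_cases h : i < m
  · rw [dif_pos ⟨h, by simp⟩, dif_pos h]
    exact congrFun ((List.getElem_concat_length (l := w) (a := a) (i := w.length) rfl (by simp))) ⟨i, h⟩
  · rw [dif_neg (by omega), dif_neg h]

lemma CauchonN_congr (m n : ℕ) (D D' : ℕ → ℕ → Bool)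
    (h : ∀ i j, j < n → D i j = D' i j) :
    CauchonN m n D ↔ CauchonN m n D' := by
  unfold CauchonN
  constructor <;> intro hC i hi j hj hb
  · rw [← h i j hj] at hb
    rcases hC i hi j hj hb with h1 | h1
    · exact Or.inl fun j' hj' => by rw [← h i j' (by omega)]; exact h1 j' hj'
    · exact Or.inr fun i' hi' => by rw [← h i' j hj]; exact h1 i' hi'
  · rw [h i j hj] at hb
    rcases hC i hi j hj hb with h1 | h1
    · exact Or.inl fun j' hj' => by rw [h i j' (by omega)]; exact h1 j' hj'
    · exact Or.inr fun i' hi' => by rw [h i' j hj]; exact h1 i' hi'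

lemma CauchonN_succ (m n : ℕ) (D : ℕ → ℕ → Bool) :
    CauchonN m (n+1) D ↔ CauchonN m n D ∧
      (∀ i < m, D i n = false → (∃ j < n, D i j = true) → ∀ i' < i, D i' n = false) := by
  constructor
  · intro hC
    refine ⟨fun i hi j hj hb => ?_, fun i hi hb hw i' hi' => ?_⟩
    · rcases hC i hi j (by omega) hb with h1 | h1
      · exact Or.inl h1
      · exact Or.inr h1
    · rcases hC i hi n (by omega) hb with h1 | h1
      · obtain ⟨j, hj, hjw⟩ := hw
        rw [h1 j hj] at hjw
        exact absurd hjw (by simp)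
      · exact h1 i' hi'
  · rintro ⟨hC, hcol⟩ i hi j hj hb
    rcases Nat.lt_or_ge j n with h | h
    · exact hC i hi j h hb
    · have hjn : j = n := by omega
      subst hjn
      by_cases hw : ∃ j' < j, D i j' = true
      · exact Or.inr (hcol i hi hb hw)
      · push_neg at hw
        exact Or.inl fun j' hj' => by
          have := hw j' hj'
          simpa using this

/-- The word-level simulation invariant. -/
lemma eval_spec {m : ℕ} (w : List (Col m)) :
    (∀ (r : Fin m → ℚ) (i : Fin m),
      uD m (extD w) (extr r) w.length i.val = form (((pcrDFA m).eval w).1 i) r i)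
    ∧ (∀ i : Fin m, ((pcrDFA m).eval w).2.1 i = true ↔ ∃ j < w.length, extD w i.val j = true)
    ∧ (((pcrDFA m).eval w).2.2 = true ↔ CauchonN m w.length (extD w)) := by
  induction w using List.reverseRecOn with
  | nil =>
    refine ⟨fun r i => ?_, fun i => ?_, ?_⟩
    · show (0 : ℚ) = form (i, false) r i
      unfold form sgn
      simp
    · constructor
      · intro h
        have h0 : ((pcrDFA m).eval []).2.1 i = false := rfl
        rw [h0] at h
        exact absurd h (by simp)
      · rintro ⟨j, hj, _⟩
        simp at hj
    · constructor
      · intro _ i hi j hj hb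
        simp at hj
      · intro _
        rfl
  | append_singleton w a ih =>
    obtain ⟨ihu, ihN, ihC⟩ := ih
    have hstep : (pcrDFA m).eval (w ++ [a]) = (pcrDFA m).step ((pcrDFA m).eval w) a :=
      DFA.evalFrom_append_singleton _ _ _ _
    set s := (pcrDFA m).eval w with hs
    have hlen : (w ++ [a]).length = w.length + 1 := by simp
    -- the new diagram agrees with the old one on the first w.length columns
    have hagree : ∀ i j, j < w.length → extD (w ++ [a]) i j = extD w i j :=
      fun i j hj => extD_append_lt w a i j hj
    have hcoln : (fun i => extD (w ++ [a]) i w.length) = colN a :=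
      funext fun i => extD_append_last w a i
    refine ⟨fun r i => ?_, fun i => ?_, ?_⟩
    · -- u simulation
      rw [hlen, hstep]
      show uD m (extD (w ++ [a])) (extr r) (w.length + 1) i.val
        = form (stepB s.1 a i) r i
      have huD : uD m (extD (w ++ [a])) (extr r) (w.length + 1)
          = stepu m (colN a) (extr r) (uD m (extD w) (extr r) w.length) := by
        show stepu m (fun i' => extD (w ++ [a]) i' w.length) (extr r)
          (uD m (extD (w ++ [a])) (extr r) w.length) = _
        rw [hcoln, uD_congr m (extD (w ++ [a])) (extD w) (extr r) w.length hagree]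
      rw [huD]
      exact stepu_form a s.1 r (uD m (extD w) (extr r) w.length) (fun i' => ihu r i') i
    · -- N simulation
      rw [hstep]
      show (s.2.1 i || a i) = true ↔ ∃ j < (w ++ [a]).length, extD (w ++ [a]) i.val j = true
      rw [Bool.or_eq_true, ihN i]
      constructor
      · rintro (⟨j, hj, hw⟩ | hw)
        · exact ⟨j, by simp; omega, by rw [hagree i.val j hj]; exact hw⟩
        · refine ⟨w.length, by simp, ?_⟩
          rw [extD_append_last]
          unfold colN
          rw [dif_pos i.isLt]
          simpa using hw
      · rintro ⟨j, hj, hw⟩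
        rw [hlen] at hj
        rcases Nat.lt_or_ge j w.length with h | h
        · exact Or.inl ⟨j, h, by rw [← hagree i.val j h]; exact hw⟩
        · have : j = w.length := by omega
          subst this
          rw [extD_append_last] at hw
          unfold colN at hw
          rw [dif_pos i.isLt] at hw
          simp only [Fin.eta] at hw
          exact Or.inr hw
    · -- alive simulation
      rw [hstep, hlen]
      show (s.2.2 && decide (okCol s.2.1 a)) = true ↔ CauchonN m (w.length + 1) (extD (w ++ [a]))
      rw [Bool.and_eq_true, decide_eq_true_iff, ihC, CauchonN_succ,
        CauchonN_congr m w.length (extD (w ++ [a])) (extD w) hagree]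
      constructor
      · rintro ⟨hC, hok⟩
        refine ⟨hC, fun i hi hb hw i' hi' => ?_⟩
        have hai : a ⟨i, hi⟩ = false := by
          have := extD_append_last w a i
          rw [this] at hb
          unfold colN at hb
          rw [dif_pos hi] at hb
          exact hb
        have hN : s.2.1 ⟨i, hi⟩ = true := by
          rw [ihN]
          obtain ⟨j, hj, hjw⟩ := hw
          exact ⟨j, hj, by rw [← hagree i j hj]; exact hjw⟩
        have := hok ⟨i, hi⟩ hai hN ⟨i', by omega⟩ (by rw [Fin.lt_def]; exact hi')
        rw [extD_append_last]
        unfold colN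
        rw [dif_pos (by omega : i' < m)]
        exact this
      · rintro ⟨hC, hok⟩
        refine ⟨hC, fun i hai hN i' hi' => ?_⟩
        have hb : extD (w ++ [a]) i.val w.length = false := by
          rw [extD_append_last]
          unfold colN
          rw [dif_pos i.isLt]
          simpa using hai
        have hw' : ∃ j < w.length, extD w i.val j = true := (ihN i).mp hN
        have hw'' : ∃ j < w.length, extD (w ++ [a]) i.val j = true := by
          obtain ⟨j, hj, hjw⟩ := hw'
          exact ⟨j, hj, by rw [hagree i.val j hj]; exact hjw⟩
        have hw3 : ∃ j < w.length, extD w i.val j = true := hw'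
        have := hok i.val i.isLt hb (by
          obtain ⟨j, hj, hjw⟩ := hw3
          exact ⟨j, hj, by rw [← hagree i.val j hj] at hjw; exact hjw⟩) i'.val hi'
        rw [extD_append_last] at this
        unfold colN at this
        rw [dif_pos i'.isLt] at this
        simpa using this

/-! ### Final assembly -/

lemma isCauchon_iff {m : ℕ} (w : List (Col m)) :
    IsCauchon (toDiagram w) ↔ CauchonN m w.length (extD w) := by
  constructor
  · intro hC i hi j hj hb
    have hb' : toDiagram w ⟨i, hi⟩ ⟨j, hj⟩ = false := by
      rw [← extD_lt]; exact hb
    rcases hC ⟨i, hi⟩ ⟨j, hj⟩ hb' with h1 | h1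
    · refine Or.inl fun j' hj' => ?_
      exact (extD_lt w ⟨i, hi⟩ ⟨j', by omega⟩).trans (h1 ⟨j', by omega⟩ hj')
    · refine Or.inr fun i' hi' => ?_
      exact (extD_lt w ⟨i', by omega⟩ ⟨j, hj⟩).trans (h1 ⟨i', by omega⟩ hi')
  · intro hC i j hb
    have hb' : extD w i.val j.val = false := by rw [extD_lt]; exact hb
    rcases hC i.val i.isLt j.val j.isLt hb' with h1 | h1
    · refine Or.inl fun j' hj' => ?_
      have := h1 j'.val hj'
      rw [extD_lt w i j'] at this
      exact this
    · refine Or.inr fun i' hi' => ?_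
      have := h1 i'.val hi'
      rw [extD_lt w i' j] at this
      exact this

lemma forms_iff {m : ℕ} (w : List (Col m)) :
    (∃ r : ℕ → ℚ, r ≠ 0 ∧ Sol m w.length (extD w) r) ↔
    (∃ rf : Fin m → ℚ, rf ≠ 0 ∧ ∀ i : Fin m,
      if ((pcrDFA m).eval w).2.1 i = true
      then form (((pcrDFA m).eval w).1 i) rf i = rf i else rf i = 0) := by
  obtain ⟨hu, hN, _⟩ := eval_spec w
  constructor
  · rintro ⟨r, hr, hsol⟩
    refine ⟨fun i => r i.val, ?_, ?_⟩
    · intro h0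
      apply hr
      funext i
      rcases Nat.lt_or_ge i m with hi | hi
      · have := congrFun h0 ⟨i, hi⟩
        simpa using this
      · exact hsol.1 i hi
    · intro i
      have hre : extr (fun i' : Fin m => r i'.val) = r := by
        funext i'
        unfold extr
        by_cases h : i' < m
        · rw [dif_pos h]
        · rw [dif_neg h]
          exact (hsol.1 i' (by omega)).symm
      by_cases hNi : ((pcrDFA m).eval w).2.1 i = true
      · rw [if_pos hNi, ← hu (fun i' => r i'.val) i, hre]
        exact (hsol.2 i.val i.isLt).1 ((hN i).mp hNi)
      · rw [if_neg hNi]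
        apply (hsol.2 i.val i.isLt).2
        intro hex
        exact hNi ((hN i).mpr hex)
  · rintro ⟨rf, hrf, hconds⟩
    refine ⟨extr rf, ?_, ?_, ?_⟩
    · intro h0
      apply hrf
      funext i
      have := congrFun h0 i.val
      unfold extr at this
      rw [dif_pos i.isLt] at this
      simpa using this
    · intro i hi
      unfold extr
      rw [dif_neg (by omega)]
    · intro i hi
      constructor
      · intro hex
        have hNi : ((pcrDFA m).eval w).2.1 ⟨i, hi⟩ = true := (hN ⟨i, hi⟩).mpr hex
        have hcnd := hconds ⟨i, hi⟩
        rw [if_pos hNi] at hcnd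
        have h1 : uD m (extD w) (extr rf) w.length i
            = form (((pcrDFA m).eval w).1 ⟨i, hi⟩) rf ⟨i, hi⟩ := hu rf ⟨i, hi⟩
        rw [h1, hcnd]
        unfold extr
        rw [dif_pos hi]
      · intro hex
        have hNi : ¬ (((pcrDFA m).eval w).2.1 ⟨i, hi⟩ = true) :=
          fun hc => hex ((hN ⟨i, hi⟩).mp hc)
        have hcnd := hconds ⟨i, hi⟩
        rw [if_neg hNi] at hcnd
        unfold extr
        rw [dif_pos hi]
        exact hcnd

end PCR

open PCR in
/-- For every positive integer `m`, the set of words over the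
alphabet `Σ_m` of `m × 1` columns whose concatenation is a primitive Cauchon
diagram (a Cauchon diagram whose skew-adjacency matrix has nonzero determinant)
is a regular language. -/
theorem primitive_cauchon_regular (m : ℕ) (hm : 0 < m) :
    Language.IsRegular
      ({ w : List (Col m) |
          IsCauchon (toDiagram w) ∧ (skewAdj (toDiagram w)).det ≠ 0 } :
        Language (Col m)) := by
  refine ⟨PState m, inferInstance, pcrDFA m, ?_⟩
  ext w
  rw [DFA.mem_accepts]
  show (pcrDFA m).evalFrom (pcrDFA m).start w ∈ (pcrDFA m).accept ↔ _
  have haccept : (pcrDFA m).evalFrom (pcrDFA m).start w ∈ (pcrDFA m).accept ↔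
      (((pcrDFA m).eval w).2.2 = true ∧ ∀ r : Fin m → ℚ,
        (∀ i, if ((pcrDFA m).eval w).2.1 i = true
          then form (((pcrDFA m).eval w).1 i) r i = r i else r i = 0) → r = 0) := Iff.rfl
  rw [haccept]
  obtain ⟨hu, hN, hC⟩ := eval_spec w
  show _ ↔ (IsCauchon (toDiagram w) ∧ (skewAdj (toDiagram w)).det ≠ 0)
  constructor
  · rintro ⟨halive, htriv⟩
    refine ⟨(isCauchon_iff w).mpr (hC.mp halive), ?_⟩
    intro hdet0
    rw [det_iff_ker, ker_iff_sol m w.length (extD w) (fun i j h => extD_ge w i j h),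
      forms_iff w] at hdet0
    obtain ⟨rf, hrf, hconds⟩ := hdet0
    exact hrf (htriv rf hconds)
  · rintro ⟨hcau, hdet⟩
    refine ⟨hC.mpr ((isCauchon_iff w).mp hcau), ?_⟩
    intro r hconds
    by_contra hr0
    apply hdet
    rw [det_iff_ker, ker_iff_sol m w.length (extD w) (fun i j h => extD_ge w i j h),
      forms_iff w]
    exact ⟨r, hr0, hconds⟩
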